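/- (Gambler's ruin expected duration) For the symmetric ±1 random walk started at a with 0 < a < b and τ = inf{ i : X_i = 0 or X_i = b }, the expected stopping time satisfies E[τ] = a(b − a). -/

import Mathlib

open MeasureTheory ProbabilityTheory Finset

/-- A measurable a.e.-bounded function is integrable on a finite measure. -/
lemma GR.integrable_of_bound {Ω : Type*} {m0 : MeasurableSpace Ω} {μ : Measure Ω}
    [IsFiniteMeasure μ] {f : Ω → ℝ} (C : ℝ) (hm : AEStronglyMeasurable f μ)
    (hb : ∀ᵐ ω ∂μ, ‖f ω‖ ≤ C) : Integrable f μ :=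
  Integrable.mono' (integrable_const C) hm hb

/-- Expectation of a fair ±1 random variable is zero. -/
lemma GR.integral_pm_eq_zero {Ω : Type*} {m0 : MeasurableSpace Ω} {μ : Measure Ω}
    [IsProbabilityMeasure μ] {Z : Ω → ℝ} (hm : Measurable Z)
    (hval : ∀ᵐ ω ∂μ, Z ω = 1 ∨ Z ω = -1)
    (hp1 : μ {ω | Z ω = 1} = 1/2) (hpm1 : μ {ω | Z ω = -1} = 1/2) :
    ∫ ω, Z ω ∂μ = 0 := by
  have hS1 : MeasurableSet {ω | Z ω = 1} := hm (measurableSet_singleton 1)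
  have hS2 : MeasurableSet {ω | Z ω = -1} := hm (measurableSet_singleton (-1))
  have hcongr : Z =ᵐ[μ] fun ω =>
      Set.indicator {ω | Z ω = 1} (fun _ => (1:ℝ)) ω +
      Set.indicator {ω | Z ω = -1} (fun _ => (-1:ℝ)) ω := by
    filter_upwards [hval] with ω hω
    rcases hω with h | h <;>
      simp [Set.indicator_apply, h, show (1:ℝ) ≠ -1 by norm_num, show (-1:ℝ) ≠ 1 by norm_num]
  rw [integral_congr_ae hcongr, integral_add, integral_indicator_const, integral_indicator_const,
    measureReal_def, measureReal_def, hp1, hpm1]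
  · norm_num
  · exact hS2
  · exact hS1
  · exact (integrable_const (1:ℝ)).indicator hS1
  · exact (integrable_const (-1:ℝ)).indicator hS2

theorem gamblers_ruin_expected_duration
    {Ω : Type*} {m0 : MeasurableSpace Ω} {μ : Measure Ω} [IsProbabilityMeasure μ]
    (Z : ℕ → Ω → ℝ) (X : ℕ → Ω → ℝ) (a b : ℤ) (τ : Ω → ℕ)
    (ha : 0 < a) (hab : a < b)
    (hZmeas : ∀ i, Measurable (Z i))
    (hindep : iIndepFun Z μ)
    (hval : ∀ i, ∀ᵐ ω ∂μ, Z i ω = 1 ∨ Z i ω = -1)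
    (hp1 : ∀ i, μ {ω | Z i ω = 1} = 1/2)
    (hpm1 : ∀ i, μ {ω | Z i ω = -1} = 1/2)
    (hX : ∀ i, X i = fun ω => (a : ℝ) + ∑ j ∈ Finset.Icc 1 i, Z j ω)
    (hτ : ∀ ω, τ ω = sInf {i | X i ω = 0 ∨ X i ω = (b : ℝ)})
    (hτint : ∫⁻ ω, (τ ω : ENNReal) ∂μ < ⊤) :
    ∫ ω, (τ ω : ℝ) ∂μ = (a : ℝ) * ((b : ℝ) - (a : ℝ)) := by
  classical
  have hb0 : (0:ℝ) < (b:ℝ) := by exact_mod_cast ha.trans hab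
  have ha0 : (0:ℝ) < (a:ℝ) := by exact_mod_cast ha
  have hXmeas : ∀ i, Measurable (X i) := by
    intro i; rw [hX i]
    exact measurable_const.add (Finset.measurable_sum _ fun j _ => (hZmeas j))
  have hX0 : ∀ ω, X 0 ω = (a:ℝ) := by intro ω; rw [hX 0]; simp
  have hXsucc : ∀ n ω, X (n+1) ω = X n ω + Z (n+1) ω := by
    intro n ω; simp only [hX]
    rw [Finset.sum_Icc_succ_top (by omega : 1 ≤ n+1)]
    ring
  -- the hitting set
  set H : Ω → Set ℕ := fun ω => {i | X i ω = 0 ∨ X i ω = (b:ℝ)} with hHdef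
  -- the "not yet stopped by time n" events
  set A : ℕ → Set Ω := fun n => {ω | ∀ i ≤ n, i ∉ H ω} with hAdef
  have hAmeas : ∀ n, MeasurableSet (A n) := by
    intro n
    have : A n = ⋂ i ∈ Finset.range (n+1),
        (X i ⁻¹' {0} ∪ X i ⁻¹' {(b:ℝ)})ᶜ := by
      ext ω
      simp only [hAdef, Set.mem_setOf_eq, Set.mem_iInter, Finset.mem_range, Set.mem_compl_iff,
        Set.mem_union, Set.mem_preimage, Set.mem_singleton_iff, Nat.lt_succ_iff, hHdef, not_or]
    rw [this]
    exact Finset.measurableSet_biInter _ fun i _ =>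
      (((hXmeas i) (measurableSet_singleton 0)).union
        ((hXmeas i) (measurableSet_singleton ((b:ℤ):ℝ)))).compl
  -- stopped times
  set σ' : ℕ → Ω → ℕ := fun n ω => sInf (H ω ∪ {n}) with hσdef
  set W : ℕ → Ω → ℝ := fun n ω => X (σ' n ω) ω with hWdef
  have hσle : ∀ n ω, σ' n ω ≤ n := fun n ω => Nat.sInf_le (by simp)
  have hσA : ∀ n ω, ω ∈ A n → σ' n ω = n := by
    intro n ω hω
    refine le_antisymm (hσle n ω) (le_csInf ⟨n, by simp⟩ ?_)
    rintro m (hm | hm)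
    · by_contra h
      exact hω m (by omega) hm
    · simp_all
  have hσnotA : ∀ n ω, ω ∉ A n → (H ω).Nonempty ∧ σ' n ω = sInf (H ω) ∧ sInf (H ω) ≤ n := by
    intro n ω hω
    simp only [hAdef, Set.mem_setOf_eq, not_forall] at hω
    obtain ⟨i, hin, hiH⟩ := hω
    have hiH' : i ∈ H ω := not_not.mp hiH
    have hne : (H ω).Nonempty := ⟨i, hiH'⟩
    have hsn : sInf (H ω) ≤ n := le_trans (Nat.sInf_le hiH') hin
    refine ⟨hne, le_antisymm (Nat.sInf_le (Set.mem_union_left _ (Nat.sInf_mem hne))) ?_, hsn⟩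
    refine le_csInf ⟨n, by simp⟩ ?_
    rintro m (hm | hm)
    · exact Nat.sInf_le hm
    · simp only [Set.mem_singleton_iff] at hm; omega
  have hσstop : ∀ n ω, (H ω).Nonempty → sInf (H ω) ≤ n → σ' n ω = sInf (H ω) := by
    intro n ω hne hsn
    refine le_antisymm (Nat.sInf_le (Set.mem_union_left _ (Nat.sInf_mem hne))) ?_
    refine le_csInf ⟨n, by simp⟩ ?_
    rintro m (hm | hm)
    · exact Nat.sInf_le hm
    · simp only [Set.mem_singleton_iff] at hm; omega
  -- recursions
  have hσrec : ∀ n ω, σ' (n+1) ω = σ' n ω + Set.indicator (A n) (fun _ => (1:ℕ)) ω := by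
    intro n ω
    by_cases hω : ω ∈ A n
    · rw [Set.indicator_of_mem hω, hσA n ω hω]
      have hA1 : ∀ i ≤ n+1, i ∈ H ω → i = n+1 := by
        intro i hi hiH
        by_contra h
        exact hω i (by omega) hiH
      refine le_antisymm (hσle _ _) (le_csInf ⟨n+1, by simp⟩ ?_)
      rintro m (hm | hm)
      · by_contra h
        have := hA1 m (by omega) hm; omega
      · simp only [Set.mem_singleton_iff] at hm; omega
    · obtain ⟨hne, hs, hsn⟩ := hσnotA n ω hω
      rw [Set.indicator_of_notMem hω, hs, add_zero]
      exact hσstop (n+1) ω hne (by omega)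
  have hWrec : ∀ n ω, W (n+1) ω = W n ω + Set.indicator (A n) (Z (n+1)) ω := by
    intro n ω
    by_cases hω : ω ∈ A n
    · rw [Set.indicator_of_mem hω]
      have h1 : σ' n ω = n := hσA n ω hω
      have h2 : σ' (n+1) ω = n + 1 := by rw [hσrec n ω, Set.indicator_of_mem hω, h1]
      simp only [hWdef, h1, h2, hXsucc n ω]
    · rw [Set.indicator_of_notMem hω]
      have h2 : σ' (n+1) ω = σ' n ω := by rw [hσrec n ω, Set.indicator_of_notMem hω, add_zero]
      simp [hWdef, h2]
  have hσmeas : ∀ n, Measurable (σ' n) := by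
    intro n
    induction n with
    | zero =>
      have : σ' 0 = fun _ => 0 := by
        funext ω; exact Nat.le_zero.mp (hσle 0 ω)
      rw [this]; exact measurable_const
    | succ n ih =>
      have : σ' (n+1) = fun ω => σ' n ω + Set.indicator (A n) (fun _ => (1:ℕ)) ω := by
        funext ω; exact hσrec n ω
      rw [this]
      exact ih.add (measurable_const.indicator (hAmeas n))
  have hW0 : ∀ ω, W 0 ω = (a:ℝ) := by
    intro ω
    have : σ' 0 ω = 0 := Nat.le_zero.mp (hσle 0 ω)
    simp [hWdef, this, hX0]
  have hWmeas : ∀ n, Measurable (W n) := by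
    intro n
    induction n with
    | zero =>
      have : W 0 = fun _ => (a:ℝ) := funext hW0
      rw [this]; exact measurable_const
    | succ n ih =>
      have : W (n+1) = fun ω => W n ω + Set.indicator (A n) (Z (n+1)) ω := funext (hWrec n)
      rw [this]
      exact ih.add ((hZmeas (n+1)).indicator (hAmeas n))
  -- the good set where all steps are ±1
  have hG : ∀ᵐ ω ∂μ, ∀ i, Z i ω = 1 ∨ Z i ω = -1 := ae_all_iff.mpr hval
  -- a.e. bound on W
  have hWbound : ∀ᵐ ω ∂μ, ∀ n, (∃ k : ℤ, W n ω = (k:ℝ)) ∧ 0 ≤ W n ω ∧ W n ω ≤ (b:ℝ) := by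
    filter_upwards [hG] with ω hω
    intro n
    induction n with
    | zero =>
      refine ⟨⟨a, hW0 ω⟩, ?_, ?_⟩ <;> rw [hW0 ω]
      · exact le_of_lt ha0
      · exact_mod_cast le_of_lt hab
    | succ n ih =>
      obtain ⟨⟨k, hk⟩, h0, hb'⟩ := ih
      by_cases hmem : ω ∈ A n
      · have hWX : W n ω = X n ω := by
          simp [hWdef, hσA n ω hmem]
        have hne0 : W n ω ≠ 0 := by
          rw [hWX]; intro h; exact hmem n le_rfl (Or.inl h)
        have hneb : W n ω ≠ (b:ℝ) := by
          rw [hWX]; intro h; exact hmem n le_rfl (Or.inr h)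
        have hk1 : 1 ≤ k := by
          rcases lt_or_ge k 1 with h | h
          · exfalso
            have : (0:ℝ) ≤ (k:ℝ) := hk ▸ h0
            have hk0 : k = 0 := by exact_mod_cast le_antisymm (by omega) (by exact_mod_cast this)
            exact hne0 (by rw [hk, hk0]; norm_num)
          · exact h
        have hkb : k ≤ b - 1 := by
          have hkb' : (k:ℝ) ≤ (b:ℝ) := hk ▸ hb'
          have : k ≤ b := by exact_mod_cast hkb'
          rcases lt_or_ge k b with h | h
          · omega
          · exfalso; exact hneb (by rw [hk]; norm_cast; omega)
        rw [hWrec n ω, Set.indicator_of_mem hmem, hk]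
        rcases hω (n+1) with h | h <;> rw [h]
        · refine ⟨⟨k+1, by push_cast; ring⟩, by positivity, ?_⟩
          have : (k:ℝ) + 1 ≤ (b:ℝ) := by exact_mod_cast (by omega : k + 1 ≤ b)
          linarith
        · refine ⟨⟨k-1, by push_cast; ring⟩, ?_, ?_⟩
          · have : (1:ℝ) ≤ (k:ℝ) := by exact_mod_cast hk1
            linarith
          · have : (k:ℝ) ≤ (b:ℝ) := by exact_mod_cast (by omega : k ≤ b)
            linarith
      · rw [hWrec n ω, Set.indicator_of_notMem hmem, add_zero]
        exact ⟨⟨k, hk⟩, h0, hb'⟩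
  have hWnorm : ∀ n, ∀ᵐ ω ∂μ, ‖W n ω‖ ≤ (b:ℝ) := by
    intro n
    filter_upwards [hWbound] with ω hω
    obtain ⟨_, h0, hb'⟩ := hω n
    rw [Real.norm_eq_abs, abs_of_nonneg h0]; exact hb'
  have hWint : ∀ n, Integrable (W n) μ :=
    fun n => GR.integrable_of_bound (b:ℝ) (hWmeas n).aestronglyMeasurable (hWnorm n)
  have hW2int : ∀ n, Integrable (fun ω => (W n ω)^2) μ := by
    intro n
    refine GR.integrable_of_bound ((b:ℝ)^2) ((hWmeas n).pow_const 2).aestronglyMeasurable ?_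
    filter_upwards [hWnorm n] with ω hω
    rw [Real.norm_eq_abs, abs_pow]
    have habs : |W n ω| ≤ (b:ℝ) := by rwa [← Real.norm_eq_abs]
    exact pow_le_pow_left₀ (abs_nonneg _) habs 2
  have hZint : ∀ i, Integrable (Z i) μ := by
    intro i
    refine GR.integrable_of_bound 1 (hZmeas i).aestronglyMeasurable ?_
    filter_upwards [hval i] with ω hω
    rcases hω with h | h <;> simp [h]
  have hEZ : ∀ i, ∫ ω, Z i ω ∂μ = 0 :=
    fun i => GR.integral_pm_eq_zero (hZmeas i) (hval i) (hp1 i) (hpm1 i)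
  -- independence: any measurable function of Z_1,...,Z_n is independent of Z_{n+1}
  have hindepkey : ∀ n (F : ((Finset.Icc 1 n : Finset ℕ) → ℝ) → ℝ), Measurable F →
      IndepFun (fun ω => F (fun j => Z j ω)) (Z (n+1)) μ := by
    intro n F hF
    have hdisj : Disjoint (Finset.Icc 1 n) ({n+1} : Finset ℕ) := by
      simp only [Finset.disjoint_singleton_right, Finset.mem_Icc]; omega
    have hbase := hindep.indepFun_finset (Finset.Icc 1 n) ({n+1} : Finset ℕ) hdisj hZmeas
    have hev : Measurable (fun v : (({n+1} : Finset ℕ) : Finset ℕ) → ℝ =>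
        v ⟨n+1, Finset.mem_singleton_self _⟩) := measurable_pi_apply _
    exact hbase.comp hF hev
  -- express A n and X n as functions of (Z j)_{j ∈ Icc 1 n}
  have hkey : ∀ n (f : Ω → ℝ), Measurable f →
      (∃ F : ((Finset.Icc 1 n : Finset ℕ) → ℝ) → ℝ, Measurable F ∧
        ∀ ω, f ω = F (fun j => Z j ω)) →
      Integrable f μ →
      ∫ ω, f ω * Z (n+1) ω ∂μ = 0 := by
    rintro n f hfm ⟨F, hFm, hFf⟩ hfint
    have hf_eq : f = fun ω => F (fun j => Z j ω) := funext hFf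
    have hind : IndepFun f (Z (n+1)) μ := by
      rw [hf_eq]; exact hindepkey n F hFm
    have h2 := hind.integral_mul_eq_mul_integral hfint.aestronglyMeasurable (hZint (n+1)).aestronglyMeasurable
    rw [hEZ (n+1), mul_zero] at h2
    simpa [Pi.mul_apply] using h2
  -- integrability of X n
  have hXint : ∀ n, Integrable (X n) μ := by
    intro n
    refine GR.integrable_of_bound (|(a:ℝ)| + n) (hXmeas n).aestronglyMeasurable ?_
    filter_upwards [hG] with ω hω
    rw [hX n]
    calc ‖(a:ℝ) + ∑ j ∈ Finset.Icc 1 n, Z j ω‖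
        ≤ ‖(a:ℝ)‖ + ‖∑ j ∈ Finset.Icc 1 n, Z j ω‖ := norm_add_le _ _
      _ ≤ |(a:ℝ)| + n := by
          refine add_le_add le_rfl ?_
          calc ‖∑ j ∈ Finset.Icc 1 n, Z j ω‖ ≤ ∑ j ∈ Finset.Icc 1 n, ‖Z j ω‖ :=
                norm_sum_le _ _
            _ ≤ ∑ j ∈ Finset.Icc 1 n, 1 := by
                refine Finset.sum_le_sum fun j _ => ?_
                rcases hω j with h | h <;> simp [h]
            _ ≤ n := by simp [Nat.Icc_eq_range']
  -- the composition functions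
  have hcomp : ∀ n (g : Ω → ℝ), (g = Set.indicator (A n) (X n) ∨
      g = Set.indicator (A n) (fun _ => (1:ℝ))) →
      ∃ F : ((Finset.Icc 1 n : Finset ℕ) → ℝ) → ℝ, Measurable F ∧
        ∀ ω, g ω = F (fun j => Z j ω) := by
    intro n g hg
    set xf : ℕ → ((Finset.Icc 1 n : Finset ℕ) → ℝ) → ℝ :=
      fun i v => (a:ℝ) + ∑ j ∈ (Finset.Icc 1 n).attach, (if (j:ℕ) ≤ i then v j else 0) with hxf
    have hxfm : ∀ i, Measurable (xf i) := by
      intro i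
      refine measurable_const.add (Finset.measurable_sum _ fun j _ => ?_)
      by_cases h : (j:ℕ) ≤ i
      · simp only [if_pos h]; exact measurable_pi_apply _
      · simp only [if_neg h]; exact measurable_const
    have hxfeq : ∀ i, i ≤ n → ∀ ω, xf i (fun j => Z j ω) = X i ω := by
      intro i hi ω
      have h1 : ∑ j ∈ (Finset.Icc 1 n).attach,
          (if (j:ℕ) ≤ i then Z (j:ℕ) ω else 0) =
          ∑ j ∈ Finset.Icc 1 n, (if j ≤ i then Z j ω else 0) :=
        Finset.sum_attach _ (fun m => if m ≤ i then Z m ω else 0)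
      have h2 : ∑ j ∈ Finset.Icc 1 n, (if j ≤ i then Z j ω else 0) =
          ∑ j ∈ (Finset.Icc 1 n).filter (· ≤ i), Z j ω := (Finset.sum_filter _ _).symm
      have h3 : (Finset.Icc 1 n).filter (· ≤ i) = Finset.Icc 1 i := by
        ext m; simp only [Finset.mem_filter, Finset.mem_Icc]; omega
      simp only [hxf, h1, h2, h3, hX i]
    set C : Set ((Finset.Icc 1 n : Finset ℕ) → ℝ) :=
      {v | ∀ i ≤ n, ¬ (xf i v = 0 ∨ xf i v = (b:ℝ))} with hC
    have hCmeas : MeasurableSet C := by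
      have : C = ⋂ i ∈ Finset.range (n+1), (xf i ⁻¹' {0} ∪ xf i ⁻¹' {(b:ℝ)})ᶜ := by
        ext v
        simp only [hC, Set.mem_setOf_eq, Set.mem_iInter, Finset.mem_range, Set.mem_compl_iff,
          Set.mem_union, Set.mem_preimage, Set.mem_singleton_iff, Nat.lt_succ_iff, not_or]
      rw [this]
      exact Finset.measurableSet_biInter _ fun i _ =>
        (((hxfm i) (measurableSet_singleton 0)).union
          ((hxfm i) (measurableSet_singleton ((b:ℤ):ℝ)))).compl
    have hmemiff : ∀ ω, (ω ∈ A n ↔ (fun j : (Finset.Icc 1 n : Finset ℕ) => Z j ω) ∈ C) := by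
      intro ω
      simp only [hAdef, Set.mem_setOf_eq, hC, hHdef]
      constructor
      · intro h i hi
        rw [hxfeq i hi ω]
        exact h i hi
      · intro h i hi
        have := h i hi
        rwa [hxfeq i hi ω] at this
    rcases hg with hg | hg
    · refine ⟨Set.indicator C (xf n), (hxfm n).indicator hCmeas, fun ω => ?_⟩
      rw [hg]
      by_cases h : ω ∈ A n
      · rw [Set.indicator_of_mem h, Set.indicator_of_mem ((hmemiff ω).mp h), hxfeq n le_rfl ω]
      · rw [Set.indicator_of_notMem h,
          Set.indicator_of_notMem (fun hc => h ((hmemiff ω).mpr hc))]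
    · refine ⟨Set.indicator C (fun _ => (1:ℝ)), measurable_const.indicator hCmeas, fun ω => ?_⟩
      rw [hg]
      by_cases h : ω ∈ A n
      · rw [Set.indicator_of_mem h, Set.indicator_of_mem ((hmemiff ω).mp h)]
      · rw [Set.indicator_of_notMem h,
          Set.indicator_of_notMem (fun hc => h ((hmemiff ω).mpr hc))]
  have hcross1 : ∀ n, ∫ ω, Set.indicator (A n) (fun _ => (1:ℝ)) ω * Z (n+1) ω ∂μ = 0 := by
    intro n
    exact hkey n _ (measurable_const.indicator (hAmeas n)) (hcomp n _ (Or.inr rfl))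
      ((integrable_const (1:ℝ)).indicator (hAmeas n))
  have hcross2 : ∀ n, ∫ ω, Set.indicator (A n) (X n) ω * Z (n+1) ω ∂μ = 0 := by
    intro n
    exact hkey n _ ((hXmeas n).indicator (hAmeas n)) (hcomp n _ (Or.inl rfl))
      ((hXint n).indicator (hAmeas n))
  have hσ0 : ∀ ω, σ' 0 ω = 0 := fun ω => Nat.le_zero.mp (hσle 0 ω)
  have hσRmeas : ∀ n, Measurable (fun ω => (σ' n ω : ℝ)) :=
    fun n => measurable_from_nat.comp (hσmeas n)
  have hσRint : ∀ n, Integrable (fun ω => (σ' n ω : ℝ)) μ := by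
    intro n
    refine GR.integrable_of_bound (n:ℝ) (hσRmeas n).aestronglyMeasurable ?_
    filter_upwards with ω
    rw [Real.norm_eq_abs, abs_of_nonneg (by positivity)]
    exact_mod_cast hσle n ω
  -- E[W n] = a
  have hEW : ∀ n, ∫ ω, W n ω ∂μ = (a:ℝ) := by
    intro n
    induction n with
    | zero => simp [hW0]
    | succ n ih =>
      have hz : ∫ ω, Set.indicator (A n) (Z (n+1)) ω ∂μ = 0 := by
        have hpt : ∀ ω, Set.indicator (A n) (Z (n+1)) ω =
            Set.indicator (A n) (fun _ => (1:ℝ)) ω * Z (n+1) ω := by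
          intro ω; by_cases h : ω ∈ A n <;> simp [Set.indicator_apply, h]
        simp only [hpt]
        exact hcross1 n
      calc ∫ ω, W (n+1) ω ∂μ
          = ∫ ω, (W n ω + Set.indicator (A n) (Z (n+1)) ω) ∂μ := by
            simp only [hWrec]
        _ = ∫ ω, W n ω ∂μ + ∫ ω, Set.indicator (A n) (Z (n+1)) ω ∂μ :=
            integral_add (hWint n) ((hZint (n+1)).indicator (hAmeas n))
        _ = (a:ℝ) := by rw [ih, hz, add_zero]
  -- E[(σ' (n+1))] = E[σ' n] + μ(A n)
  have hEσrec : ∀ n, ∫ ω, (σ' (n+1) ω : ℝ) ∂μ =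
      ∫ ω, (σ' n ω : ℝ) ∂μ + (μ (A n)).toReal := by
    intro n
    have hpt : ∀ ω, (σ' (n+1) ω : ℝ) =
        (σ' n ω : ℝ) + Set.indicator (A n) (fun _ => (1:ℝ)) ω := by
      intro ω
      rw [hσrec n ω]
      by_cases h : ω ∈ A n <;> simp [Set.indicator_apply, h]
    calc ∫ ω, (σ' (n+1) ω : ℝ) ∂μ
        = ∫ ω, ((σ' n ω : ℝ) + Set.indicator (A n) (fun _ => (1:ℝ)) ω) ∂μ := by
          simp only [hpt]
      _ = ∫ ω, (σ' n ω : ℝ) ∂μ + ∫ ω, Set.indicator (A n) (fun _ => (1:ℝ)) ω ∂μ :=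
          integral_add (hσRint n) ((integrable_const (1:ℝ)).indicator (hAmeas n))
      _ = ∫ ω, (σ' n ω : ℝ) ∂μ + (μ (A n)).toReal := by
          rw [integral_indicator_const _ (hAmeas n)]; simp [measureReal_def]
  -- E[W n ^ 2] = a^2 + E[σ' n]
  have hEW2 : ∀ n, ∫ ω, (W n ω)^2 ∂μ = (a:ℝ)^2 + ∫ ω, (σ' n ω : ℝ) ∂μ := by
    intro n
    induction n with
    | zero => simp [hW0, hσ0]
    | succ n ih =>
      have hpt : ∀ᵐ ω ∂μ, (W (n+1) ω)^2 = (W n ω)^2 +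
          2 * (Set.indicator (A n) (X n) ω * Z (n+1) ω) +
          Set.indicator (A n) (fun _ => (1:ℝ)) ω := by
        filter_upwards [hval (n+1)] with ω hZω
        rw [hWrec n ω]
        by_cases h : ω ∈ A n
        · have hWX : W n ω = X n ω := by simp [hWdef, hσA n ω h]
          rw [Set.indicator_of_mem h, Set.indicator_of_mem h, Set.indicator_of_mem h, ← hWX]
          have hz2 : (Z (n+1) ω)^2 = 1 := by rcases hZω with h' | h' <;> rw [h'] <;> norm_num
          linear_combination hz2
        · rw [Set.indicator_of_notMem h, Set.indicator_of_notMem h,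
            Set.indicator_of_notMem h]
          ring
      have hint2 : Integrable (fun ω => 2 * (Set.indicator (A n) (X n) ω * Z (n+1) ω)) μ := by
        refine GR.integrable_of_bound (2 * (b:ℝ)) ?_ ?_
        · exact ((((hXmeas n).indicator (hAmeas n)).mul (hZmeas (n+1))).const_mul 2).aestronglyMeasurable
        · filter_upwards [hWbound, hval (n+1)] with ω hWω hZω
          have h1 : ‖Set.indicator (A n) (X n) ω‖ ≤ (b:ℝ) := by
            by_cases h : ω ∈ A n
            · rw [Set.indicator_of_mem h]
              have hWX : W n ω = X n ω := by simp [hWdef, hσA n ω h]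
              obtain ⟨_, h0, hb'⟩ := hWω n
              rw [← hWX, Real.norm_eq_abs, abs_of_nonneg h0]; exact hb'
            · rw [Set.indicator_of_notMem h]; simp [le_of_lt hb0]
          have h2 : ‖Z (n+1) ω‖ ≤ 1 := by rcases hZω with h' | h' <;> simp [h']
          calc ‖2 * (Set.indicator (A n) (X n) ω * Z (n+1) ω)‖
              = 2 * (‖Set.indicator (A n) (X n) ω‖ * ‖Z (n+1) ω‖) := by
                rw [norm_mul, norm_mul]; norm_num
            _ ≤ 2 * ((b:ℝ) * 1) := by
                refine mul_le_mul_of_nonneg_left ?_ (by norm_num)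
                exact mul_le_mul h1 h2 (norm_nonneg _) (le_of_lt hb0)
            _ = 2 * (b:ℝ) := by ring
      calc ∫ ω, (W (n+1) ω)^2 ∂μ
          = ∫ ω, ((W n ω)^2 + 2 * (Set.indicator (A n) (X n) ω * Z (n+1) ω) +
              Set.indicator (A n) (fun _ => (1:ℝ)) ω) ∂μ := integral_congr_ae hpt
        _ = ∫ ω, ((W n ω)^2 + 2 * (Set.indicator (A n) (X n) ω * Z (n+1) ω)) ∂μ +
            ∫ ω, Set.indicator (A n) (fun _ => (1:ℝ)) ω ∂μ :=
            integral_add ((hW2int n).add hint2) ((integrable_const (1:ℝ)).indicator (hAmeas n))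
        _ = ∫ ω, (W n ω)^2 ∂μ + ∫ ω, 2 * (Set.indicator (A n) (X n) ω * Z (n+1) ω) ∂μ +
            ∫ ω, Set.indicator (A n) (fun _ => (1:ℝ)) ω ∂μ := by
            rw [integral_add (hW2int n) hint2]
        _ = (a:ℝ)^2 + ∫ ω, (σ' n ω : ℝ) ∂μ + (μ (A n)).toReal := by
            rw [ih, integral_const_mul (2:ℝ), hcross2 n, mul_zero, add_zero,
              integral_indicator_const _ (hAmeas n)]
            simp [measureReal_def]
        _ = (a:ℝ)^2 + ∫ ω, (σ' (n+1) ω : ℝ) ∂μ := by rw [hEσrec n]; ring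
  -- the walk a.s. hits {0, b}
  set N : Set Ω := ⋂ n, A n with hN
  have hNmeas : MeasurableSet N := MeasurableSet.iInter hAmeas
  have hμN : μ N = 0 := by
    have hboundN : ∀ n : ℕ, (μ N).toReal * n ≤ (b:ℝ)^2 := by
      intro n
      have h1 : ∫ ω, Set.indicator N (fun _ => (n:ℝ)) ω ∂μ ≤ ∫ ω, (σ' n ω:ℝ) ∂μ := by
        refine integral_mono ((integrable_const _).indicator hNmeas) (hσRint n) ?_
        intro ω
        by_cases h : ω ∈ N
        · rw [Set.indicator_of_mem h]
          simp only [hσA n ω (Set.mem_iInter.mp h n), le_refl]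
        · rw [Set.indicator_of_notMem h]; positivity
      rw [integral_indicator_const _ hNmeas, smul_eq_mul, measureReal_def] at h1
      have h3 : ∫ ω, (W n ω)^2 ∂μ ≤ (b:ℝ)^2 := by
        calc ∫ ω, (W n ω)^2 ∂μ ≤ ∫ _ω, ((b:ℝ)^2) ∂μ := by
              refine integral_mono_ae (hW2int n) (integrable_const _) ?_
              filter_upwards [hWnorm n] with ω hω
              have habs : |W n ω| ≤ (b:ℝ) := by rwa [← Real.norm_eq_abs]
              nlinarith [abs_nonneg (W n ω), le_abs_self (W n ω), neg_abs_le (W n ω)]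
          _ = (b:ℝ)^2 := by simp
      have h2 := hEW2 n
      nlinarith [sq_nonneg (a:ℝ)]
    by_contra hc
    have hpos : 0 < (μ N).toReal :=
      ENNReal.toReal_pos hc (measure_ne_top μ N)
    obtain ⟨n, hn⟩ := exists_nat_gt ((b:ℝ)^2 / (μ N).toReal)
    have := hboundN n
    rw [div_lt_iff₀ hpos] at hn
    nlinarith
  have hhit : ∀ᵐ ω ∂μ, (H ω).Nonempty := by
    have h0 : ∀ᵐ ω ∂μ, ω ∉ N := by
      rw [ae_iff]
      simpa [Classical.not_not] using hμN
    filter_upwards [h0] with ω hω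
    simp only [hN, Set.mem_iInter, not_forall] at hω
    obtain ⟨n, hn⟩ := hω
    exact (hσnotA n ω hn).1
  -- convergence of stopped quantities
  have hτ_eq : ∀ ω, (H ω).Nonempty → ∀ n, τ ω ≤ n → σ' n ω = τ ω := by
    intro ω hne n hn
    rw [hτ ω] at hn ⊢
    exact hσstop n ω hne hn
  have htendσ : ∀ᵐ ω ∂μ, Filter.Tendsto (fun n => (σ' n ω : ℝ)) Filter.atTop
      (nhds (τ ω : ℝ)) := by
    filter_upwards [hhit] with ω hω
    refine tendsto_atTop_of_eventually_const (i₀ := τ ω) fun n hn => ?_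
    rw [hτ_eq ω hω n hn]
  have htendW : ∀ᵐ ω ∂μ, Filter.Tendsto (fun n => W n ω) Filter.atTop
      (nhds (X (τ ω) ω)) := by
    filter_upwards [hhit] with ω hω
    refine tendsto_atTop_of_eventually_const (i₀ := τ ω) fun n hn => ?_
    simp only [hWdef, hτ_eq ω hω n hn]
  have htendW2 : ∀ᵐ ω ∂μ, Filter.Tendsto (fun n => (W n ω)^2) Filter.atTop
      (nhds ((X (τ ω) ω)^2)) := by
    filter_upwards [htendW] with ω hω
    exact hω.pow 2
  have hhitval : ∀ᵐ ω ∂μ, X (τ ω) ω = 0 ∨ X (τ ω) ω = (b:ℝ) := by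
    filter_upwards [hhit] with ω hω
    have : τ ω ∈ H ω := by rw [hτ ω]; exact Nat.sInf_mem hω
    exact this
  have hτRae : AEMeasurable (fun ω => (τ ω : ℝ)) μ :=
    aemeasurable_of_tendsto_metrizable_ae Filter.atTop
      (fun n => (hσRmeas n).aemeasurable) htendσ
  have hτRint : Integrable (fun ω => (τ ω : ℝ)) μ := by
    refine ⟨hτRae.aestronglyMeasurable, ?_⟩
    have heq : ∫⁻ ω, (‖(τ ω : ℝ)‖₊ : ENNReal) ∂μ = ∫⁻ ω, (τ ω : ENNReal) ∂μ :=
      lintegral_congr fun ω => by simp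
    show (∫⁻ ω, (‖(τ ω : ℝ)‖₊ : ENNReal) ∂μ) < ⊤
    rw [heq]; exact hτint
  have L1 : Filter.Tendsto (fun n => ∫ ω, (σ' n ω : ℝ) ∂μ) Filter.atTop
      (nhds (∫ ω, (τ ω : ℝ) ∂μ)) := by
    refine tendsto_integral_of_dominated_convergence (fun ω => (τ ω : ℝ))
      (fun n => (hσRmeas n).aestronglyMeasurable) hτRint (fun n => ?_) htendσ
    filter_upwards [hhit] with ω hω
    rw [Real.norm_eq_abs, abs_of_nonneg (by positivity)]
    have hle : σ' n ω ≤ τ ω := by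
      rw [hτ ω]
      exact Nat.sInf_le (Set.mem_union_left _ (Nat.sInf_mem hω))
    exact_mod_cast hle
  have L2 : Filter.Tendsto (fun n => ∫ ω, W n ω ∂μ) Filter.atTop
      (nhds (∫ ω, X (τ ω) ω ∂μ)) :=
    tendsto_integral_of_dominated_convergence (fun _ => (b:ℝ))
      (fun n => (hWmeas n).aestronglyMeasurable) (integrable_const _)
      (fun n => hWnorm n) htendW
  have L3 : Filter.Tendsto (fun n => ∫ ω, (W n ω)^2 ∂μ) Filter.atTop
      (nhds (∫ ω, (X (τ ω) ω)^2 ∂μ)) := by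
    refine tendsto_integral_of_dominated_convergence (fun _ => (b:ℝ)^2)
      (fun n => ((hWmeas n).pow_const 2).aestronglyMeasurable) (integrable_const _)
      (fun n => ?_) htendW2
    filter_upwards [hWnorm n] with ω hω
    have habs : |W n ω| ≤ (b:ℝ) := by rwa [← Real.norm_eq_abs]
    rw [Real.norm_eq_abs, abs_pow]
    exact pow_le_pow_left₀ (abs_nonneg _) habs 2
  -- conclusion
  have e1 : ∫ ω, X (τ ω) ω ∂μ = (a:ℝ) := by
    have hconst : (fun n => ∫ ω, W n ω ∂μ) = fun _ => (a:ℝ) := funext hEW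
    rw [hconst] at L2
    exact tendsto_nhds_unique L2 tendsto_const_nhds
  have e2 : ∫ ω, (X (τ ω) ω)^2 ∂μ = (a:ℝ)^2 + ∫ ω, (τ ω : ℝ) ∂μ := by
    have hconst : (fun n => ∫ ω, (W n ω)^2 ∂μ) =
        fun n => (a:ℝ)^2 + ∫ ω, (σ' n ω : ℝ) ∂μ := funext hEW2
    rw [hconst] at L3
    exact tendsto_nhds_unique L3 (tendsto_const_nhds.add L1)
  have e3 : ∫ ω, (X (τ ω) ω)^2 ∂μ = (b:ℝ) * ∫ ω, X (τ ω) ω ∂μ := by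
    have hc : (fun ω => (X (τ ω) ω)^2) =ᵐ[μ] fun ω => (b:ℝ) * X (τ ω) ω := by
      filter_upwards [hhitval] with ω hω
      rcases hω with h | h <;> rw [h] <;> ring
    rw [integral_congr_ae hc, integral_const_mul]
  rw [e3, e1] at e2
  linear_combination -e2
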